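/- With the same notation, |⟨ε_{k/n}, δ_{k/n}⟩² − 1/(4n)| = (1/(4n))(√(k+1) − √k)|√(k+1) − √k − 2|, and the sum over k from 0 to n−1 of |⟨ε_{k/n}, δ_{k/n}⟩² − 1/(4n)| is O(1/√n) as n → ∞. -/

import Mathlib

open Real Finset Asymptotics

/-- `⟨ε_{k/n}, δ_{k/n}⟩ = (1/(2√n))(√(k+1) − √k − 1)`. -/
noncomputable def epsDeltaDiag (n k : ℕ) : ℝ :=
  (1 / (2 * Real.sqrt n)) * (Real.sqrt (k + 1) - Real.sqrt k - 1)

lemma d_nonneg (k : ℕ) : 0 ≤ Real.sqrt (k + 1) - Real.sqrt k :=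
  sub_nonneg.2 (Real.sqrt_le_sqrt (by linarith))

lemma d_le_one (k : ℕ) : Real.sqrt (k + 1) - Real.sqrt k ≤ 1 := by
  have h1 : Real.sqrt (k+1) ^ 2 = (k:ℝ)+1 := Real.sq_sqrt (by positivity)
  have h2 : Real.sqrt k ^ 2 = (k:ℝ) := Real.sq_sqrt (by positivity)
  nlinarith [Real.sqrt_nonneg (k:ℝ), Real.sqrt_nonneg ((k:ℝ)+1)]

lemma key (n : ℕ) (hn : 1 ≤ n) (k : ℕ) :
    |epsDeltaDiag n k ^ 2 - 1 / (4 * n)|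
      = (1 / (4 * n)) * (Real.sqrt (k + 1) - Real.sqrt k)
          * |Real.sqrt (k + 1) - Real.sqrt k - 2| := by
  have hn0 : (0:ℝ) < n := by exact_mod_cast hn
  have hs : (0:ℝ) < Real.sqrt n := Real.sqrt_pos.2 hn0
  have hsq : Real.sqrt n ^ 2 = (n:ℝ) := Real.sq_sqrt hn0.le
  set d := Real.sqrt (k+1) - Real.sqrt k with hd
  have heq : epsDeltaDiag n k ^ 2 - 1 / (4 * n)
      = (1/(4*n)) * (d * (d - 2)) := by
    unfold epsDeltaDiag
    rw [← hd]
    field_simp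
    have h4 : (2 * Real.sqrt n)^2 = 4*(n:ℝ) := by rw [mul_pow, hsq]; ring
    rw [hsq]; ring
  rw [heq, abs_mul, abs_mul, abs_of_nonneg (by positivity : (0:ℝ) ≤ 1/(4*(n:ℝ))),
    abs_of_nonneg (d_nonneg k), mul_assoc]

theorem epsDeltaDiag_sq_identity_and_sum :
    (∀ n : ℕ, 1 ≤ n → ∀ k : ℕ,
      |epsDeltaDiag n k ^ 2 - 1 / (4 * n)|
        = (1 / (4 * n)) * (Real.sqrt (k + 1) - Real.sqrt k)
            * |Real.sqrt (k + 1) - Real.sqrt k - 2|)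
    ∧ (fun n : ℕ => ∑ k ∈ Finset.range n, |epsDeltaDiag n k ^ 2 - 1 / (4 * n)|)
        =O[Filter.atTop] (fun n : ℕ => 1 / Real.sqrt n) := by
  refine ⟨key, ?_⟩
  rw [Asymptotics.isBigO_iff]
  refine ⟨1/2, Filter.eventually_atTop.2 ⟨1, fun n hn => ?_⟩⟩
  have hn0 : (0:ℝ) < n := by exact_mod_cast hn
  have hs : (0:ℝ) < Real.sqrt n := Real.sqrt_pos.2 hn0
  have hsq : Real.sqrt n ^ 2 = (n:ℝ) := Real.sq_sqrt hn0.le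
  have hsum : ∑ k ∈ Finset.range n, |epsDeltaDiag n k ^ 2 - 1 / (4 * n)|
      ≤ ∑ k ∈ Finset.range n, (1/(2*(n:ℝ))) * (Real.sqrt (k+1) - Real.sqrt k) := by
    refine Finset.sum_le_sum fun k _ => ?_
    rw [key n hn k]
    have hd0 := d_nonneg k
    have hd1 := d_le_one k
    have habs : |Real.sqrt (k + 1) - Real.sqrt k - 2| ≤ 2 := by
      rw [abs_le]; constructor <;> linarith
    calc (1 / (4 * (n:ℝ))) * (Real.sqrt (k + 1) - Real.sqrt k)
            * |Real.sqrt (k + 1) - Real.sqrt k - 2|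
        ≤ (1 / (4 * (n:ℝ))) * (Real.sqrt (k + 1) - Real.sqrt k) * 2 := by
          apply mul_le_mul_of_nonneg_left habs (by positivity)
      _ = (1/(2*(n:ℝ))) * (Real.sqrt (k+1) - Real.sqrt k) := by ring
  have htel : ∑ k ∈ Finset.range n, (Real.sqrt ((k:ℝ)+1) - Real.sqrt k) = Real.sqrt n := by
    have h := Finset.sum_range_sub (fun k : ℕ => Real.sqrt (k:ℝ)) n
    push_cast at h
    simpa using h
  have hbound : ∑ k ∈ Finset.range n, |epsDeltaDiag n k ^ 2 - 1 / (4 * n)|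
      ≤ 1/(2*Real.sqrt n) := by
    calc ∑ k ∈ Finset.range n, |epsDeltaDiag n k ^ 2 - 1 / (4 * n)|
        ≤ ∑ k ∈ Finset.range n, (1/(2*(n:ℝ))) * (Real.sqrt (k+1) - Real.sqrt k) := hsum
      _ = (1/(2*(n:ℝ))) * ∑ k ∈ Finset.range n, (Real.sqrt ((k:ℝ)+1) - Real.sqrt k) := by
          rw [Finset.mul_sum]
      _ = (1/(2*(n:ℝ))) * Real.sqrt n := by rw [htel]
      _ = 1/(2*Real.sqrt n) := by
          rw [eq_div_iff (by positivity)]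
          field_simp
          nlinarith [hsq]
  rw [Real.norm_eq_abs, Real.norm_eq_abs,
    abs_of_nonneg (Finset.sum_nonneg fun k _ => abs_nonneg _),
    abs_of_nonneg (by positivity : (0:ℝ) ≤ 1/Real.sqrt n)]
  calc ∑ k ∈ Finset.range n, |epsDeltaDiag n k ^ 2 - 1 / (4 * n)| ≤ 1/(2*Real.sqrt n) := hbound
    _ = 1/2 * (1/Real.sqrt n) := by ring
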